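/- Let (R, m) be a commutative noetherian local ring, I an ideal of R and M an R-module. Then Ext^1_R(R/I, M) = 0 if and only if M is I-excellent and the canonical R-linear map σ : M → Hom_R(I, I•M), defined by σ(x)(r) = r•x, is surjective. -/

import Mathlib

open CategoryTheory

/-- The canonical map `σ : M → Hom_R(I, I•M)`, `σ(x)(r) = r • x`. -/
noncomputable def sigmaMap {R : Type u} [CommRing R] (I : Ideal R) (M : Type v)
    [AddCommGroup M] [Module R M] :
    M →ₗ[R] (I →ₗ[R] ↥(I • (⊤ : Submodule R M))) where
  toFun x :=
    { toFun := fun r => ⟨(r : R) • x, Submodule.smul_mem_smul r.2 Submodule.mem_top⟩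
      map_add' := by
        intro r s
        apply Subtype.ext
        simp [add_smul]
      map_smul' := by
        intro c r
        apply Subtype.ext
        simp [mul_smul] }
  map_add' := by
    intro x y
    ext r
    simp [smul_add]
  map_smul' := by
    intro c x
    refine LinearMap.ext fun r => Subtype.ext ?_
    simpa using smul_comm (r : R) c x

open CategoryTheory Limits Projective

noncomputable section
namespace MyExt

variable {C : Type u} [Category.{v} C] [Abelian C] [EnoughProjectives C]
variable {Z P0 P1 : C} (p : P0 ⟶ Z) (d : P1 ⟶ P0)

/-- complex from a prescribed two-step start. -/
def cpx : ChainComplex C ℕ :=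
  ChainComplex.mk' P0 P1 d (fun f => ⟨Projective.syzygies f, Projective.d f, by erw [Category.assoc, kernel.condition, comp_zero]⟩)

lemma cpx_X0 : (cpx d).X 0 = P0 := rfl
lemma cpx_X1 : (cpx d).X 1 = P1 := rfl
lemma cpx_d10 : (cpx d).d 1 0 = d := by simp [cpx]
lemma cpx_d21 : (cpx d).d 2 1 = Projective.d d := by
  apply ChainComplex.mk_d_2_1

variable [Projective P0] [Projective P1]

instance (n : ℕ) : Projective ((cpx d).X n) := by
  obtain (_ | _ | _ | n) := n
  · exact ‹Projective P0›
  · exact ‹Projective P1›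
  · apply Projective.projective_over
  · apply Projective.projective_over

lemma cpx_exactAt_succ (n : ℕ) : (cpx d).ExactAt (n + 1) := by
  rw [HomologicalComplex.exactAt_iff' _ (n + 1 + 1) (n + 1) n (by simp) (by simp)]
  have e : (cpx d).sc' (n + 1 + 1) (n + 1) n ≅ ShortComplex.mk (Projective.d ((cpx d).d (n + 1) n))
      ((cpx d).d (n + 1) n) (by erw [Category.assoc, kernel.condition, comp_zero]) :=
    ShortComplex.isoMk (ChainComplex.mk'XIso P0 P1 d
        (fun f => ⟨Projective.syzygies f, Projective.d f, by erw [Category.assoc, kernel.condition, comp_zero]⟩) n)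
      (Iso.refl _) (Iso.refl _)
      (by exact (ChainComplex.mk'_d P0 P1 d
        (fun f => ⟨Projective.syzygies f, Projective.d f, by erw [Category.assoc, kernel.condition, comp_zero]⟩) n).symm.trans (Category.comp_id _).symm)
      (by exact (Category.id_comp _).trans (Category.comp_id _).symm)
  exact (ShortComplex.exact_iff_of_iso e).2 (exact_d_f _)

variable (w : d ≫ p = 0) (ex : (ShortComplex.mk d p w).Exact) [Epi p]

/-- A projective resolution from a prescribed two-step start. -/
def res : ProjectiveResolution Z where
  complex := cpx d
  π := (ChainComplex.toSingle₀Equiv _ _).symm ⟨p, by rw [cpx_d10]; exact w⟩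
  quasiIso := ⟨fun n => by
    cases n
    · rw [ChainComplex.quasiIsoAt₀_iff, ShortComplex.quasiIso_iff_of_zeros']
      · refine (ShortComplex.exact_and_epi_g_iff_of_iso ?_).2 ⟨ex, ‹Epi p›⟩
        exact ShortComplex.isoMk (Iso.refl _) (Iso.refl _) (Iso.refl _)
          (by simp [cpx_d10]; exact (Category.id_comp _).trans (Category.comp_id _).symm) (by simp; erw [ChainComplex.toSingle₀Equiv_symm_apply_f_zero, Category.comp_id]; exact Category.id_comp _)
      all_goals rfl
    · rw [quasiIsoAt_iff_exactAt']
      · apply cpx_exactAt_succ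
      · apply ChainComplex.exactAt_succ_single_obj⟩

end MyExt

namespace MyExt

lemma subsingleton_iff_isZero {R : Type u} [CommRing R] (X : ModuleCat.{u} R) :
    Subsingleton X ↔ IsZero X := by
  constructor
  · intro h; exact ModuleCat.isZero_of_subsingleton X
  · intro h
    have h1 : (𝟙 X : X ⟶ X) = 0 := h.eq_of_src _ _
    have key : ∀ x : X, x = 0 := fun x => by
      have h2 := congrArg (fun f : X ⟶ X => f x) h1
      simpa using h2
    exact ⟨fun a b => (key a).trans (key b).symm⟩

variable {R : Type u} [CommRing R] (I : Ideal R) (M : Type u)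
    [AddCommGroup M] [Module R M]

abbrev P0 : ModuleCat.{u} R := ModuleCat.of R R
abbrev P1 : ModuleCat.{u} R := ModuleCat.of R (I →₀ R)

def dd : P1 I ⟶ P0 (R := R) :=
  ModuleCat.ofHom (Finsupp.linearCombination R (fun i : I => (i : R)))

def pp : P0 (R := R) ⟶ ModuleCat.of R (R ⧸ I) := ModuleCat.ofHom (Submodule.mkQ I)

instance : Projective (P0 (R := R)) :=
  ModuleCat.projective_of_free (Module.Basis.singleton PUnit.{u+1} R)

instance : Projective (P1 I) :=
  ModuleCat.projective_of_free (Finsupp.basisSingleOne (R := R) (ι := I))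

instance : Epi (pp I) :=
  (ModuleCat.epi_iff_surjective _).mpr (Submodule.mkQ_surjective I)

lemma dd_w : dd I ≫ pp I = 0 := by
  apply ModuleCat.hom_ext
  apply Finsupp.lhom_ext
  intro i b
  show Submodule.mkQ I (Finsupp.linearCombination R (fun i : I => (i : R)) (Finsupp.single i b)) = 0
  rw [Finsupp.linearCombination_single, Submodule.mkQ_apply, Submodule.Quotient.mk_eq_zero]
  exact I.smul_mem b i.2

lemma dd_exact : (ShortComplex.mk (dd I) (pp I) (dd_w I)).Exact := by
  rw [ShortComplex.moduleCat_exact_iff]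
  intro (x : R) hx
  have hxI : x ∈ I := by
    have h3 : Submodule.mkQ I x = 0 := hx
    rwa [Submodule.mkQ_apply, Submodule.Quotient.mk_eq_zero] at h3
  exact ⟨Finsupp.single ⟨x, hxI⟩ 1, by
    show Finsupp.linearCombination R (fun i : I => (i : R)) (Finsupp.single ⟨x, hxI⟩ 1) = x
    simp⟩

end MyExt

namespace MyExt
variable {R : Type u} [CommRing R] (I : Ideal R) (M : Type u)
    [AddCommGroup M] [Module R M]

def myres : ProjectiveResolution (ModuleCat.of R (R ⧸ I)) :=
  res (pp I) (dd I) (dd_w I) (dd_exact I)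

lemma d_comp_self : Projective.d (dd I) ≫ dd I = 0 := by erw [Category.assoc, kernel.condition, comp_zero]

lemma kill (φ : P1 I ⟶ ModuleCat.of R M)
    (hφ : Projective.d (dd I) ≫ φ = 0) (v : P1 I) (hv : dd I v = 0) : φ v = 0 := by
  obtain ⟨w, hw⟩ := (ShortComplex.moduleCat_exact_iff _).mp (exact_d_f (dd I)) v hv
  have := congrArg (fun f : Projective.syzygies (dd I) ⟶ ModuleCat.of R M => f w) hφ
  dsimp at this
  rw [← hw]
  simpa using this

lemma condE_iff :
    (∀ (φ : P1 I ⟶ ModuleCat.of R M), Projective.d (dd I) ≫ φ = 0 →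
        ∃ ψ : P0 (R := R) ⟶ ModuleCat.of R M, dd I ≫ ψ = φ) ↔
      (∀ f : I →ₗ[R] M, ∃ x : M, ∀ i : I, f i = (i : R) • x) := by
  constructor
  · intro h f
    set T : (I →₀ R) →ₗ[R] I := Finsupp.linearCombination R (fun i : I => i) with hT
    have hsub : ∀ v : I →₀ R, dd I v = (T v : R) := by
      intro v
      induction v using Finsupp.induction_linear with
      | zero => simp [dd]
      | add a b ha hb => simp only [map_add, Submodule.coe_add, ha, hb]
      | single a b => simp [dd, hT]
    set φ : P1 I ⟶ ModuleCat.of R M := ModuleCat.ofHom (f.comp T) with hφdef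
    have hφ : Projective.d (dd I) ≫ φ = 0 := by
      apply ModuleCat.hom_ext
      apply LinearMap.ext
      intro v
      have h1 : dd I (Projective.d (dd I) v) = 0 := by
        calc dd I ((Projective.d (dd I)) v)
            = (Projective.d (dd I) ≫ dd I) v := rfl
          _ = (0 : Projective.syzygies (dd I) ⟶ P0 (R := R)) v := by rw [d_comp_self I]
          _ = 0 := rfl
      have h2 : T (Projective.d (dd I) v) = 0 := by
        have h1' := (hsub (Projective.d (dd I) v)).symm.trans h1
        exact Subtype.ext (by simpa using h1')
      show f (T (Projective.d (dd I) v)) = 0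
      rw [h2, map_zero]
    obtain ⟨ψ, hψ⟩ := h φ hφ
    refine ⟨ψ (1 : R), fun i => ?_⟩
    have h3 : φ (Finsupp.single i 1) = ψ (dd I (Finsupp.single i 1)) :=
      (congrArg (fun g : P1 I ⟶ ModuleCat.of R M => g (Finsupp.single i 1)) hψ).symm
    have h4 : f i = φ (Finsupp.single i 1) := by
      show f i = f (T (Finsupp.single i 1))
      rw [hT]; simp
    have h5 : dd I (Finsupp.single i 1) = (i : R) := by simp [dd]
    rw [h4, h3, h5]
    calc ψ ((i : R)) = ψ ((i : R) • (1 : R)) := by rw [smul_eq_mul, mul_one]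
      _ = (i : R) • ψ (1 : R) := map_smul ψ.hom _ _
  · intro h φ hφ
    have kill' := kill I M φ hφ
    have hsingle : ∀ (i : I) (b : R), dd I (Finsupp.single i b) = b * (i : R) := by
      intro i b; simp [dd, smul_eq_mul]
    set f : I →ₗ[R] M :=
      { toFun := fun i => φ (Finsupp.single i 1)
        map_add' := by
          intro i j
          have hv : dd I (Finsupp.single (i + j) 1
              - (Finsupp.single i 1 + Finsupp.single j 1)) = 0 := by
            rw [map_sub, map_add, hsingle, hsingle, hsingle]
            push_cast
            simp only [smul_eq_mul, one_mul, mul_one]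
            exact sub_self _
          have h0 := kill' _ hv
          rw [map_sub, map_add, sub_eq_zero] at h0
          exact h0
        map_smul' := by
          intro r i
          have hv : dd I (Finsupp.single (r • i) 1 - r • Finsupp.single i 1) = 0 := by
            rw [map_sub, map_smul, hsingle, hsingle]
            push_cast
            simp only [smul_eq_mul, one_mul, mul_one]
            exact sub_self _
          have h0 := kill' _ hv
          rw [map_sub, map_smul, sub_eq_zero] at h0
          simpa using h0 } with hf
    obtain ⟨x, hx⟩ := h f
    refine ⟨ModuleCat.ofHom (LinearMap.toSpanSingleton R M x), ?_⟩
    apply ModuleCat.hom_ext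
    apply Finsupp.lhom_ext
    intro i b
    show (LinearMap.toSpanSingleton R M x) (dd I (Finsupp.single i b)) = φ (Finsupp.single i b)
    rw [hsingle, LinearMap.toSpanSingleton_apply]
    have h6 : (Finsupp.single i b : I →₀ R) = b • Finsupp.single i 1 := by
      rw [Finsupp.smul_single, smul_eq_mul, mul_one]
    rw [h6, map_smul]
    have h7 : φ (Finsupp.single i 1) = (i : R) • x := hx i
    rw [h7, smul_smul, mul_comm]

end MyExt

namespace MyExt
variable {R : Type u} [CommRing R] (I : Ideal R) (M : Type u)
    [AddCommGroup M] [Module R M]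

lemma ext_iff_condE :
    Subsingleton (((Ext R (ModuleCat.{u} R) 1).obj
        (Opposite.op (ModuleCat.of R (R ⧸ I)))).obj (ModuleCat.of R M)) ↔
      (∀ f : I →ₗ[R] M, ∃ x : M, ∀ i : I, f i = (i : R) • x) := by
  rw [subsingleton_iff_isZero, ← condE_iff I M]
  have e := (myres I).isoExt (R := R) 1 (ModuleCat.of R M)
  have h1 : IsZero (((Ext R (ModuleCat.{u} R) 1).obj
      (Opposite.op (ModuleCat.of R (R ⧸ I)))).obj (ModuleCat.of R M)) ↔
      ((cpx (dd I)).linearYonedaObj R (ModuleCat.of R M)).ExactAt 1 := by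
    rw [HomologicalComplex.exactAt_iff_isZero_homology]
    exact ⟨fun h => h.of_iso e.symm, fun h => h.of_iso e⟩
  rw [h1, HomologicalComplex.exactAt_iff' _ 0 1 2 (by simp) (by simp),
    ShortComplex.moduleCat_exact_iff]
  constructor
  · intro h φ hφ
    obtain ⟨ψ, hψ⟩ := h φ (show (cpx (dd I)).d 2 1 ≫ φ = 0 by rw [cpx_d21]; exact hφ)
    refine ⟨ψ, ?_⟩
    have h2 : (cpx (dd I)).d 1 0 ≫ ψ = φ := hψ
    rwa [cpx_d10] at h2
  · intro h φ hφ
    have hφ' : Projective.d (dd I) ≫ φ = 0 := by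
      have h2 : (cpx (dd I)).d 2 1 ≫ φ = 0 := hφ
      rwa [cpx_d21] at h2
    obtain ⟨ψ, hψ⟩ := h φ hφ'
    refine ⟨ψ, ?_⟩
    show (cpx (dd I)).d 1 0 ≫ ψ = φ
    rw [cpx_d10]; exact hψ

end MyExt

end

namespace MyExt
variable {R : Type u} [CommRing R] (I : Ideal R) (M : Type u)
    [AddCommGroup M] [Module R M]

lemma condE_iff_rhs :
    (∀ f : I →ₗ[R] M, ∃ x : M, ∀ i : I, f i = (i : R) • x) ↔
      ((I • (⊤ : Submodule R M) = ⨆ f : I →ₗ[R] M, LinearMap.range f) ∧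
        Function.Surjective (sigmaMap I M)) := by
  constructor
  · intro h
    constructor
    · apply le_antisymm
      · rw [Submodule.smul_le]
        intro r hr m _
        refine Submodule.mem_iSup_of_mem
          ((LinearMap.toSpanSingleton R M m).comp I.subtype) ⟨⟨r, hr⟩, ?_⟩
        simp [LinearMap.toSpanSingleton_apply]
      · refine iSup_le fun f => ?_
        rintro _ ⟨i, rfl⟩
        obtain ⟨x, hx⟩ := h f
        rw [hx]
        exact Submodule.smul_mem_smul i.2 Submodule.mem_top
    · intro g
      obtain ⟨x, hx⟩ := h ((I • (⊤ : Submodule R M)).subtype.comp g)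
      refine ⟨x, ?_⟩
      apply LinearMap.ext
      intro i
      apply Subtype.ext
      exact (hx i).symm
  · rintro ⟨heq, hsurj⟩ f
    have hr : LinearMap.range f ≤ I • (⊤ : Submodule R M) := by
      rw [heq]
      exact le_iSup (fun f : I →ₗ[R] M => LinearMap.range f) f
    set g : ↥I →ₗ[R] ↥(I • (⊤ : Submodule R M)) :=
      f.codRestrict (I • (⊤ : Submodule R M)) (fun i => hr ⟨i, rfl⟩) with hg
    obtain ⟨x, hx⟩ := hsurj g
    refine ⟨x, fun i => ?_⟩
    have h1 := congrArg (fun φ : ↥I →ₗ[R] ↥(I • (⊤ : Submodule R M)) => ((φ i : M))) hx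
    simpa [hg, sigmaMap] using h1.symm

end MyExt

/-- Proposition 1.6: `Ext¹_R(R/I, M) = 0` iff `M` is `I`-excellent (`I•M = γ_I(M)`) and the
canonical map `σ : M → Hom_R(I, I•M)` is surjective. -/
theorem ext_vanishing_iff_iExcellent_and_sigma_surjective
    {R : Type u} [CommRing R] [IsNoetherianRing R] [IsLocalRing R]
    (I : Ideal R) (M : Type u) [AddCommGroup M] [Module R M] :
    Subsingleton (((Ext R (ModuleCat.{u} R) 1).obj
        (Opposite.op (ModuleCat.of R (R ⧸ I)))).obj (ModuleCat.of R M)) ↔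
      ((I • (⊤ : Submodule R M) = ⨆ f : I →ₗ[R] M, LinearMap.range f) ∧
        Function.Surjective (sigmaMap I M)) := by
  rw [MyExt.ext_iff_condE I M, MyExt.condE_iff_rhs I M]
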